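/- If U_1 and U_2 are 3-dimensional isotropic subspaces of V with L_{U_1} = L_{U_2}, then U_1 = U_2; that is, the assignment U ↦ L_U is injective on 3-dimensional isotropic subspaces. -/

import Mathlib

namespace SSD

noncomputable section

/-- `V` is the 7-dimensional complex vector space `ℂ^7`. -/
abbrev V7 : Type := Fin 7 → ℂ

/-- `Ŵ` is the 8-dimensional spin space, with basis (in this order):
`1, v̂₅, v̂₆, v̂₇, v̂₅v̂₆, v̂₆v̂₇, v̂₅v̂₇, v̂₅v̂₆v̂₇`. -/
abbrev W8 : Type := Fin 8 → ℂ

/-- The constant `1/√2` as a complex number. -/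
def is2 : ℂ := ((Real.sqrt 2 : ℝ) : ℂ)⁻¹

/-- The Clifford action of `v ∈ V` on `x ∈ Ŵ`:  `e₅,e₆,e₇` act by exterior
multiplication by `v̂₅,v̂₆,v̂₇`; `e₁,e₂,e₃` act by `−∂/∂v̂₇, ∂/∂v̂₆, −∂/∂v̂₅`;
`e₄` acts by `(1/√2)·(−1)^deg`. Written out in coordinates. -/
def actFun (v : V7) (x : W8) : W8 := fun k =>
  match k with
  | 0 => -(v 0) * x 3 + v 1 * x 2 - v 2 * x 1 + is2 * v 3 * x 0
  | 1 => v 0 * x 6 - v 1 * x 4 - is2 * v 3 * x 1 + v 4 * x 0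
  | 2 => v 0 * x 5 - v 2 * x 4 - is2 * v 3 * x 2 + v 5 * x 0
  | 3 => v 1 * x 5 - v 2 * x 6 - is2 * v 3 * x 3 + v 6 * x 0
  | 4 => -(v 0) * x 7 + is2 * v 3 * x 4 + v 4 * x 2 - v 5 * x 1
  | 5 => -(v 2) * x 7 + is2 * v 3 * x 5 + v 5 * x 3 - v 6 * x 2
  | 6 => -(v 1) * x 7 + is2 * v 3 * x 6 + v 4 * x 3 - v 6 * x 1
  | 7 => -(is2 * v 3) * x 7 + v 4 * x 5 - v 5 * x 6 + v 6 * x 4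

/-- The action `v · x`, packaged as a bilinear map. -/
def act : V7 →ₗ[ℂ] W8 →ₗ[ℂ] W8 :=
  LinearMap.mk₂ ℂ actFun
    (fun m m' n => by funext k; fin_cases k <;> simp [actFun] <;> ring)
    (fun c m n => by funext k; fin_cases k <;> simp [actFun] <;> ring)
    (fun m n n' => by funext k; fin_cases k <;> simp [actFun] <;> ring)
    (fun c m n => by funext k; fin_cases k <;> simp [actFun] <;> ring)

/-- The bilinear form `B` on `V`: `B(eᵢ,eⱼ) = (−1)^(i+1)` if `i+j=8`, else `0`. -/
def Bform (u w : V7) : ℂ :=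
  u 0 * w 6 + u 6 * w 0 - u 1 * w 5 - u 5 * w 1 + u 2 * w 4 + u 4 * w 2 - u 3 * w 3

/-- The quadratic form `Q(v) = B(v,v)/2` on `V`. -/
def Qform (v : V7) : ℂ := Bform v v / 2

/-- The quadratic form `Q̂` on `Ŵ`:
`Q̂ = α_∅α₅₆₇ + α₆α₅₇ − α₇α₅₆ − α₆₇α₅` in the coordinates of the basis above. -/
def Qhat (x : W8) : ℂ := x 0 * x 7 + x 2 * x 6 - x 3 * x 4 - x 5 * x 1

/-- The bilinear form `B̂(p,q) = Q̂(p+q) − Q̂(p) − Q̂(q)` on `Ŵ`. -/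
def Bhat (p q : W8) : ℂ := Qhat (p + q) - Qhat p - Qhat q

/-- A subspace `U ⊆ V` is isotropic if `B` vanishes identically on it. -/
def IsIsotropic (U : Submodule ℂ V7) : Prop :=
  ∀ u ∈ U, ∀ w ∈ U, Bform u w = 0

/-- `L_U = {x ∈ Ŵ | u·x = 0 for all u ∈ U}`. -/
def LU (U : Submodule ℂ V7) : Submodule ℂ W8 :=
  ⨅ u ∈ U, LinearMap.ker (act u)

/-- `ψ : Ŵ → V` is an invariant surjection with spinor `p` if `p ≠ 0`, `ψ(p)=0`
and `ψ(v·p) = v` for all `v ∈ V`. -/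
def IsInvSurj (ψ : W8 →ₗ[ℂ] V7) (p : W8) : Prop :=
  p ≠ 0 ∧ ψ p = 0 ∧ ∀ v : V7, ψ (act v p) = v

set_option linter.unreachableTactic false
set_option linter.unusedTactic false

lemma is2_sq : is2 * is2 = 2⁻¹ := by
  rw [is2, ← mul_inv]
  norm_num [← Complex.ofReal_mul, Real.mul_self_sqrt]

lemma clifford (v w : V7) (x : W8) :
    act v (act w x) + act w (act v x) = -(Bform v w) • x := by
  have h : is2 * is2 = 2⁻¹ := is2_sq
  funext k
  show actFun v (actFun w x) k + actFun w (actFun v x) k = -(Bform v w) * x k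
  fin_cases k <;> simp [actFun, Bform] <;>
    first
      | linear_combination (2 * v 3 * w 3 * x 0) * h
      | linear_combination (2 * v 3 * w 3 * x 1) * h
      | linear_combination (2 * v 3 * w 3 * x 2) * h
      | linear_combination (2 * v 3 * w 3 * x 3) * h
      | linear_combination (2 * v 3 * w 3 * x 4) * h
      | linear_combination (2 * v 3 * w 3 * x 5) * h
      | linear_combination (2 * v 3 * w 3 * x 6) * h
      | linear_combination (2 * v 3 * w 3 * x 7) * h
      | linear_combination (-2 * v 3 * w 3 * x 0) * h
      | linear_combination (-2 * v 3 * w 3 * x 1) * h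
      | linear_combination (-2 * v 3 * w 3 * x 2) * h
      | linear_combination (-2 * v 3 * w 3 * x 3) * h
      | linear_combination (-2 * v 3 * w 3 * x 4) * h
      | linear_combination (-2 * v 3 * w 3 * x 5) * h
      | linear_combination (-2 * v 3 * w 3 * x 6) * h
      | linear_combination (-2 * v 3 * w 3 * x 7) * h

lemma Bform_symm (u w : V7) : Bform u w = Bform w u := by simp [Bform]; ring

lemma act_sq (v : V7) (hv : Bform v v = 0) (x : W8) : act v (act v x) = 0 := by
  have h := clifford v v x
  rw [hv] at h
  simp only [neg_zero, zero_smul] at h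
  have h2 : (2 : ℂ) • (act v (act v x)) = 0 := by rw [two_smul]; exact h
  exact (smul_eq_zero.1 h2).resolve_left (by norm_num)

lemma act_anticomm (v w : V7) (h : Bform v w = 0) (x : W8) :
    act v (act w x) = - act w (act v x) := by
  have hc := clifford v w x
  rw [h] at hc
  simp only [neg_zero, zero_smul] at hc
  exact eq_neg_of_add_eq_zero_left hc

def BformL : LinearMap.BilinForm ℂ V7 :=
  LinearMap.mk₂ ℂ Bform
    (fun m m' n => by simp [Bform]; ring)
    (fun c m n => by simp [Bform]; ring)
    (fun m n n' => by simp [Bform]; ring)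
    (fun c m n => by simp [Bform]; ring)

@[simp] lemma BformL_apply (u w : V7) : BformL u w = Bform u w := rfl

lemma BformL_refl : BformL.IsRefl := fun u w h => by
  simpa [Bform_symm w u] using h

lemma BformL_nondeg : BformL.Nondegenerate := by
  refine (LinearMap.IsRefl.nondegenerate_iff_separatingLeft BformL_refl).2 ?_
  intro v h
  funext i
  fin_cases i
  · simpa [Bform, Pi.single_apply] using h (Pi.single 6 1)
  · have := h (Pi.single 5 1); simp [Bform, Pi.single_apply] at this; simpa using this
  · simpa [Bform, Pi.single_apply] using h (Pi.single 4 1)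
  · have := h (Pi.single 3 1); simp [Bform, Pi.single_apply] at this; simpa using this
  · simpa [Bform, Pi.single_apply] using h (Pi.single 2 1)
  · have := h (Pi.single 1 1); simp [Bform, Pi.single_apply] at this; simpa using this
  · simpa [Bform, Pi.single_apply] using h (Pi.single 0 1)

lemma halfker {M : Type} [AddCommGroup M] [Module ℂ M] [FiniteDimensional ℂ M]
    (f : M →ₗ[ℂ] M) (h : ∀ x, f (f x) = 0) :
    Module.finrank ℂ M ≤ 2 * Module.finrank ℂ (LinearMap.ker f) := by
  have hr : LinearMap.range f ≤ LinearMap.ker f := by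
    rintro _ ⟨x, rfl⟩
    exact LinearMap.mem_ker.2 (h x)
  have h1 := Submodule.finrank_mono hr
  have h2 := LinearMap.finrank_range_add_finrank_ker f
  omega

lemma stepker (f : W8 →ₗ[ℂ] W8) (S : Submodule ℂ W8) (hf : ∀ x, f (f x) = 0)
    (hS : ∀ x ∈ S, f x ∈ S) :
    Module.finrank ℂ S ≤ 2 * Module.finrank ℂ (S ⊓ LinearMap.ker f : Submodule ℂ W8) := by
  set g := f.restrict hS with hg
  have hgg : ∀ y, g (g y) = 0 := by
    intro y
    ext
    simp [hg, LinearMap.restrict_apply, hf]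
  have hmap : (LinearMap.ker g).map S.subtype = S ⊓ LinearMap.ker f := by
    ext x
    constructor
    · rintro ⟨⟨y, hy⟩, hky, rfl⟩
      refine ⟨hy, ?_⟩
      have := congrArg Subtype.val (LinearMap.mem_ker.1 hky)
      simpa [hg, LinearMap.restrict_apply] using this
    · rintro ⟨hx, hker⟩
      exact ⟨⟨x, hx⟩, LinearMap.mem_ker.2 (Subtype.ext (by
        simpa [hg, LinearMap.restrict_apply] using LinearMap.mem_ker.1 hker)), rfl⟩
  have := halfker g hgg
  rwa [← hmap, Submodule.finrank_map_subtype_eq]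

lemma mem_LU_iff (U : Submodule ℂ V7) (p : W8) :
    p ∈ LU U ↔ ∀ u ∈ U, act u p = 0 := by
  simp [LU, Submodule.mem_iInf, LinearMap.mem_ker]

lemma exists_spinor (U : Submodule ℂ V7) (hiso : IsIsotropic U)
    (hdim : Module.finrank ℂ U = 3) : ∃ p : W8, p ≠ 0 ∧ p ∈ LU U := by
  obtain b := Module.finBasisOfFinrankEq ℂ U hdim
  set u : Fin 3 → V7 := fun i => (b i : V7) with hu
  have hmem : ∀ i, u i ∈ U := fun i => (b i).2
  have hB : ∀ i j, Bform (u i) (u j) = 0 := fun i j => hiso _ (hmem i) _ (hmem j)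
  set f : Fin 3 → (W8 →ₗ[ℂ] W8) := fun i => act (u i) with hfdef
  have hsq : ∀ i x, f i (f i x) = 0 := fun i x => act_sq _ (hB i i) x
  -- step 1
  have h8 : Module.finrank ℂ (⊤ : Submodule ℂ W8) = 8 := by
    simp [Module.finrank_fin_fun]
  have hS1 : ∀ x ∈ (⊤ : Submodule ℂ W8), f 0 x ∈ (⊤ : Submodule ℂ W8) := fun x _ => trivial
  have h1 := stepker (f 0) ⊤ (hsq 0) hS1
  rw [h8, top_inf_eq] at h1
  -- step 2
  have hS2 : ∀ x ∈ LinearMap.ker (f 0), f 1 x ∈ LinearMap.ker (f 0) := by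
    intro x hx
    have := act_anticomm (u 0) (u 1) (hB 0 1) x
    simp only [LinearMap.mem_ker] at hx ⊢
    show act (u 0) (act (u 1) x) = 0
    rw [this]
    show -(act (u 1) (act (u 0) x)) = 0
    rw [hx]
    simp
  have h2 := stepker (f 1) (LinearMap.ker (f 0)) (hsq 1) hS2
  -- step 3
  have hS3 : ∀ x ∈ (LinearMap.ker (f 0) ⊓ LinearMap.ker (f 1) : Submodule ℂ W8),
      f 2 x ∈ (LinearMap.ker (f 0) ⊓ LinearMap.ker (f 1) : Submodule ℂ W8) := by
    rintro x ⟨hx0, hx1⟩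
    simp only [SetLike.mem_coe, LinearMap.mem_ker] at hx0 hx1
    constructor
    · show act (u 0) (act (u 2) x) = 0
      rw [act_anticomm (u 0) (u 2) (hB 0 2) x, hx0]
      simp
    · show act (u 1) (act (u 2) x) = 0
      rw [act_anticomm (u 1) (u 2) (hB 1 2) x, hx1]
      simp
  have h3 := stepker (f 2) (LinearMap.ker (f 0) ⊓ LinearMap.ker (f 1)) (hsq 2) hS3
  set K : Submodule ℂ W8 :=
    LinearMap.ker (f 0) ⊓ LinearMap.ker (f 1) ⊓ LinearMap.ker (f 2) with hK
  have hKpos : 1 ≤ Module.finrank ℂ K := by omega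
  have hKne : K ≠ ⊥ := by
    intro hbot
    rw [hbot, finrank_bot] at hKpos
    omega
  obtain ⟨p, hpK, hp0⟩ := Submodule.exists_mem_ne_zero_of_ne_bot hKne
  refine ⟨p, hp0, (mem_LU_iff U p).2 ?_⟩
  intro v hv
  obtain ⟨hp01, hp2⟩ := hpK
  obtain ⟨hp0', hp1⟩ := hp01
  have hfp : ∀ i, act (u i) p = 0 := by
    intro i
    fin_cases i
    · exact hp0'
    · exact hp1
    · exact hp2
  have hrepr := b.sum_repr ⟨v, hv⟩
  have hval : v = ∑ i, b.repr ⟨v, hv⟩ i • u i := by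
    have := congrArg Subtype.val hrepr
    simp only [Submodule.coe_sum, Submodule.coe_smul] at this
    exact this.symm
  rw [hval]
  rw [map_sum]
  simp only [map_smul, LinearMap.coe_sum, Finset.sum_apply, LinearMap.smul_apply]
  simp [hfp]

lemma mem_of_ann (p : W8) (hp : p ≠ 0) (U : Submodule ℂ V7) (hU : IsIsotropic U)
    (hdim : Module.finrank ℂ U = 3) (hpU : ∀ u ∈ U, act u p = 0)
    (v : V7) (hvv : Bform v v = 0) (hvp : act v p = 0) : v ∈ U := by
  by_contra hvU
  have hv0 : v ≠ 0 := fun h => hvU (h ▸ U.zero_mem)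
  have hBvu : ∀ u ∈ U, Bform v u = 0 := by
    intro u hu
    have hc := clifford v u p
    rw [hpU u hu, hvp] at hc
    simp only [map_zero, add_zero] at hc
    have : (Bform v u) • p = 0 := by
      have := hc.symm
      rw [neg_smul] at this
      simpa using this.symm
    rcases smul_eq_zero.1 this with h | h
    · exact h
    · exact absurd h hp
  set U' : Submodule ℂ V7 := U ⊔ (ℂ ∙ v) with hU'
  have hinf : U ⊓ (ℂ ∙ v) = ⊥ := by
    rw [Submodule.eq_bot_iff]
    rintro x ⟨hxU, hxv⟩
    obtain ⟨c, rfl⟩ := Submodule.mem_span_singleton.1 hxv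
    rcases eq_or_ne c 0 with rfl | hc
    · simp
    · refine absurd ?_ hvU
      have := U.smul_mem c⁻¹ hxU
      rwa [smul_smul, inv_mul_cancel₀ hc, one_smul] at this
  have hdim' : Module.finrank ℂ U' = 4 := by
    have hsum := Submodule.finrank_sup_add_finrank_inf_eq U (ℂ ∙ v)
    rw [hinf, hdim, finrank_span_singleton hv0] at hsum
    rw [show Module.finrank ℂ (⊥ : Submodule ℂ V7) = 0 from finrank_bot ℂ V7] at hsum
    rw [hU']
    omega
  -- U' isotropic
  have hiso' : ∀ a ∈ U', ∀ c ∈ U', Bform a c = 0 := by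
    have key : ∀ a ∈ U', Bform v a = 0 ∧ ∀ u ∈ U, Bform u a = 0 := by
      intro a ha
      obtain ⟨x, hx, y, hy, rfl⟩ := Submodule.mem_sup.1 ha
      obtain ⟨c, rfl⟩ := Submodule.mem_span_singleton.1 hy
      constructor
      · have : BformL v (x + c • v) = 0 := by
          simp only [map_add, map_smul, smul_eq_mul, BformL_apply]
          rw [hBvu x hx, hvv]; ring
        exact this
      · intro u hu
        have : BformL u (x + c • v) = 0 := by
          simp only [map_add, map_smul]
          have h1 : Bform u x = 0 := hU u hu x hx
          have h2 : Bform u v = 0 := by rw [Bform_symm]; exact hBvu u hu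
          simp only [smul_eq_mul, BformL_apply] at *
          rw [h1, h2]; ring
        exact this
    intro a ha c hc
    obtain ⟨x, hx, y, hy, rfl⟩ := Submodule.mem_sup.1 ha
    obtain ⟨d, rfl⟩ := Submodule.mem_span_singleton.1 hy
    obtain ⟨hc1, hc2⟩ := key c hc
    have : BformL (x + d • v) c = 0 := by
      simp only [map_add, map_smul, LinearMap.add_apply, LinearMap.smul_apply,
        smul_eq_mul, BformL_apply]
      rw [hc2 x hx, hc1]; ring
    exact this
  -- orthogonal dimension contradiction
  have horth : U' ≤ BformL.orthogonal U' := by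
    intro m hm
    exact (LinearMap.BilinForm.mem_orthogonal_iff).2 fun n hn => hiso' n hn m hm
  have h7 : Module.finrank ℂ V7 = 7 := Module.finrank_fin_fun ℂ
  have hod := LinearMap.BilinForm.finrank_orthogonal BformL_nondeg U'
  have hle := Submodule.finrank_mono horth
  rw [hod, h7, hdim'] at hle
  omega


/-- the assignment `U ↦ L_U` is injective on 3-dimensional
isotropic subspaces. -/
theorem statement_2 (U₁ U₂ : Submodule ℂ V7)
    (hdim₁ : Module.finrank ℂ U₁ = 3) (hiso₁ : IsIsotropic U₁)
    (hdim₂ : Module.finrank ℂ U₂ = 3) (hiso₂ : IsIsotropic U₂)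
    (hL : LU U₁ = LU U₂) : U₁ = U₂ := by
  obtain ⟨p, hp0, hpL⟩ := exists_spinor U₁ hiso₁ hdim₁
  have hpL2 : p ∈ LU U₂ := hL ▸ hpL
  have h1 : ∀ u ∈ U₁, act u p = 0 := (mem_LU_iff U₁ p).1 hpL
  have h2 : ∀ u ∈ U₂, act u p = 0 := (mem_LU_iff U₂ p).1 hpL2
  apply le_antisymm
  · intro v hv
    exact mem_of_ann p hp0 U₂ hiso₂ hdim₂ h2 v (hiso₁ v hv v hv) (h1 v hv)
  · intro v hv
    exact mem_of_ann p hp0 U₁ hiso₁ hdim₁ h1 v (hiso₂ v hv v hv) (h2 v hv)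

end
end SSD
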